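/- (Coval equation of the cardioid) Let a > 0 and consider the cardioid γ(t) := 2a(1 + cos t)e^{it}, viewed as a curve in ℂ, with cusp at 0. For every t ∈ ℝ with γ'(t) ≠ 0, define for b ∈ ℂ the pedal coordinate p(b) := Im( conj(γ(t) − b) · γ'(t) ) / ‖γ'(t)‖. Then 27a² · p(0) = 4 · p(a)³. -/

import Mathlib

open Complex ComplexConjugate

/-- Coval equation of the cardioid: for the cardioid `γ(t) = 2a(1 + cos t)e^{it}` with `a > 0`
and cusp at `0`, at every regular point the pedal coordinates
`p(b) = Im(conj(γ(t) − b)·γ'(t)) / ‖γ'(t)‖` satisfy `27a²·p(0) = 4·p(a)³`. -/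
theorem cardioid_coval (a : ℝ) (ha : 0 < a) (t : ℝ)
    (γ : ℝ → ℂ)
    (hγ : γ = fun s : ℝ => 2 * (a : ℂ) * (1 + Real.cos s) * Complex.exp ((s : ℂ) * Complex.I))
    (hreg : deriv γ t ≠ 0) :
    27 * a ^ 2 * ((conj (γ t - 0) * deriv γ t).im / ‖deriv γ t‖) =
      4 * ((conj (γ t - (a : ℂ)) * deriv γ t).im / ‖deriv γ t‖) ^ 3 := by
  set c := Real.cos t with hc
  set s := Real.sin t with hs
  have hexp : Complex.exp ((t:ℂ) * Complex.I) = (c:ℂ) + (s:ℂ)*Complex.I := by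
    rw [Complex.exp_mul_I, ← Complex.ofReal_cos, ← Complex.ofReal_sin]
  have hf : HasDerivAt (fun u : ℝ => 2 * (a : ℂ) * (1 + (Real.cos u : ℂ)))
      (2 * (a:ℂ) * ((-Real.sin t : ℝ) : ℂ)) t :=
    ((Real.hasDerivAt_cos t).ofReal_comp.const_add (1:ℂ)).const_mul (2*(a:ℂ))
  have hg : HasDerivAt (fun u : ℝ => Complex.exp ((u:ℂ) * Complex.I))
      (Complex.exp ((t:ℂ)*Complex.I) * Complex.I) t := by
    have := (((hasDerivAt_id t).ofReal_comp).mul_const Complex.I).cexp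
    simpa using this
  have hD : HasDerivAt γ (2 * (a:ℂ) * ((-Real.sin t : ℝ):ℂ) * Complex.exp ((t:ℂ)*Complex.I)
      + 2 * (a:ℂ) * (1 + (c:ℂ)) * (Complex.exp ((t:ℂ)*Complex.I) * Complex.I)) t := by
    rw [hγ]
    exact hf.mul hg
  have hDval : deriv γ t = 2 * (a:ℂ) * ((c:ℂ) + (s:ℂ)*Complex.I)
      * ((-s : ℂ) + (1 + (c:ℂ)) * Complex.I) := by
    rw [hD.deriv, hexp, ← hs]
    push_cast
    ring
  have hγt : γ t = 2 * (a:ℂ) * (1 + (c:ℂ)) * ((c:ℂ) + (s:ℂ)*Complex.I) := by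
    rw [hγ]
    show 2 * (a:ℂ) * (1 + (Real.cos t : ℂ)) * Complex.exp ((t:ℂ)*Complex.I) = _
    rw [hexp, ← hc]
  have hsc : s^2 = 1 - c^2 := by
    have := Real.sin_sq_add_cos_sq t; rw [← hs, ← hc] at this; linarith
  have hA2 : (‖deriv γ t‖)^2 = 8 * a^2 * (1 + c) := by
    rw [Complex.sq_norm, hDval, Complex.normSq_apply]
    simp [Complex.mul_re, Complex.mul_im]
    linear_combination (4*a^2*(s^2+c^2+2*c+2)) * hsc
  have hX : (conj (γ t - 0) * deriv γ t).im = 4*a^2*(1+c)^2 := by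
    rw [hγt, hDval]
    simp [Complex.mul_im, Complex.mul_re]
    linear_combination (4*a^2*(1+c)^2) * hsc
  have hY : (conj (γ t - (a:ℂ)) * deriv γ t).im = 6*a^2*(1+c) := by
    rw [hγt, hDval]
    simp [Complex.mul_im, Complex.mul_re, Complex.sub_im, Complex.sub_re]
    linear_combination (2*a^2*(2*c^2+4*c+3)) * hsc
  have hA : ‖deriv γ t‖ ≠ 0 := by
    simpa using hreg
  rw [hX, hY]
  set A := ‖deriv γ t‖ with hAdef
  have key : 27 * a^2 * (4*a^2*(1+c)^2) * A^2 = 4 * (6*a^2*(1+c))^3 := by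
    rw [hA2]; ring
  calc 27 * a^2 * (4*a^2*(1+c)^2 / A)
      = (27 * a^2 * (4*a^2*(1+c)^2) * A^2) / A^3 := by
        field_simp
    _ = (4 * (6*a^2*(1+c))^3) / A^3 := by rw [key]
    _ = 4 * (6*a^2*(1+c) / A)^3 := by rw [div_pow]; ring
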